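/- Let H be a real inner product space, let z_t, ε_∅, ε_tgt ∈ H, let ᾱ ∈ (0,1) and γ ∈ (0,1). Define ẑ(c) = (z_t − √(1−ᾱ)·ε_c)/√ᾱ for c ∈ {∅, tgt}. Then the unique minimizer over z ∈ H of the objective ‖z − ẑ(∅)‖² + (γ/(1−γ))·‖z − ẑ(tgt)‖² equals (z_t − √(1−ᾱ)·ε^γ)/√ᾱ, where ε^γ = ε_∅ + γ·(ε_tgt − ε_∅). That is, the regularized latent optimization of DreamSampler reproduces Tweedie's formula with classifier-free guidance of scale γ. -/
import Mathlib

lemma dreamsampler_aux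
    {H : Type*} [NormedAddCommGroup H] [InnerProductSpace ℝ H]
    (w d : H) (γ : ℝ) (hγ1 : γ < 1) :
    ‖w + γ • d‖ ^ 2 + (γ / (1 - γ)) * ‖w - (1 - γ) • d‖ ^ 2
      = (1 / (1 - γ)) * ‖w‖ ^ 2 + γ * ‖d‖ ^ 2 := by
  have h1 : (1 : ℝ) - γ ≠ 0 := by linarith
  rw [@norm_add_sq_real, @norm_sub_sq_real, norm_smul, norm_smul,
    real_inner_smul_right, real_inner_smul_right]
  have hγabs : |1 - γ| = 1 - γ := abs_of_pos (by linarith)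
  rw [Real.norm_eq_abs, Real.norm_eq_abs, hγabs]
  field_simp
  ring_nf
  rcases abs_cases γ with ⟨h, _⟩ | ⟨h, _⟩ <;> rw [h] <;> ring

/-- DreamSampler Theorem 1: the unique minimizer of the regularized latent
optimization `‖z − zhat(∅)‖² + (γ/(1−γ))·‖z − zhat(tgt)‖²` equals Tweedie's formula
with classifier-free guidance of scale `γ`. -/
theorem dreamsampler_thm1
    {H : Type*} [NormedAddCommGroup H] [InnerProductSpace ℝ H]
    (zt εnull εtgt : H) (ᾱ : ℝ) (hᾱ0 : 0 < ᾱ) (hᾱ1 : ᾱ < 1)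
    (γ : ℝ) (hγ0 : 0 < γ) (hγ1 : γ < 1) :
    let zhatnull : H := (Real.sqrt ᾱ)⁻¹ • (zt - Real.sqrt (1 - ᾱ) • εnull)
    let zhattgt : H := (Real.sqrt ᾱ)⁻¹ • (zt - Real.sqrt (1 - ᾱ) • εtgt)
    let εγ : H := εnull + γ • (εtgt - εnull)
    let f : H → ℝ := fun z => ‖z - zhatnull‖ ^ 2 + (γ / (1 - γ)) * ‖z - zhattgt‖ ^ 2
    let zbar : H := (Real.sqrt ᾱ)⁻¹ • (zt - Real.sqrt (1 - ᾱ) • εγ)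
    ∀ z : H, f zbar ≤ f z ∧ (f zbar = f z ↔ z = zbar) := by
  intro zhatnull zhattgt εγ f zbar z
  set d : H := zhattgt - zhatnull with hd
  have hzbar : zbar = zhatnull + γ • d := by
    simp only [zbar, zhatnull, hd, zhattgt, εγ]
    module
  have hf : ∀ y : H, f y = (1 / (1 - γ)) * ‖y - zbar‖ ^ 2 + γ * ‖d‖ ^ 2 := by
    intro y
    have e1 : y - zhatnull = (y - zbar) + γ • d := by rw [hzbar]; abel
    have e2 : y - zhattgt = (y - zbar) - (1 - γ) • d := by
      rw [hzbar, hd]; module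
    simp only [f, e1, e2]
    exact dreamsampler_aux (y - zbar) d γ hγ1
  have h1γ : (0 : ℝ) < 1 / (1 - γ) := div_pos one_pos (by linarith)
  have hz : f z = (1 / (1 - γ)) * ‖z - zbar‖ ^ 2 + γ * ‖d‖ ^ 2 := hf z
  have hzb : f zbar = γ * ‖d‖ ^ 2 := by simp [hf zbar]
  constructor
  · rw [hz, hzb]; nlinarith [sq_nonneg ‖z - zbar‖]
  · rw [hz, hzb]
    constructor
    · intro h
      have hsq : ‖z - zbar‖ ^ 2 = 0 := by nlinarith
      have hn : ‖z - zbar‖ = 0 := by nlinarith [norm_nonneg (z - zbar)]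
      exact sub_eq_zero.mp (norm_eq_zero.mp hn)
    · intro h; rw [h]; simp
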